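/- For every n ∈ ℕ₊, the central binomial coefficient satisfies binom(2n, n) ≥ (2^{2n}/√(nπ)) · e^{−2/(15n)}. -/

import Mathlib

open Real Filter Stirling Topology

lemma ident (n : ℕ) (hn : 0 < n) :
    (Nat.centralBinom n : ℝ) * Real.sqrt n / 4 ^ n
      = stirlingSeq (2 * n) / stirlingSeq n ^ 2 := by
  have hN : (0:ℝ) < n := by exact_mod_cast hn
  have hfac : ((2 * n).factorial : ℝ)
      = (Nat.centralBinom n : ℝ) * n.factorial * n.factorial := by
    have h := Nat.choose_mul_factorial_mul_factorial (Nat.le_mul_of_pos_left n two_pos)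
    rw [two_mul, Nat.add_sub_cancel, ← two_mul] at h
    rw [Nat.centralBinom]
    exact_mod_cast h.symm
  rw [stirlingSeq, stirlingSeq, hfac]
  push_cast
  rw [show Real.sqrt (2*(2*(n:ℝ))) = 2 * Real.sqrt n by
      rw [show (2:ℝ)*(2*n) = 4*n by ring, Real.sqrt_mul (by norm_num) (n:ℝ),
        show (4:ℝ) = 2^2 by norm_num, Real.sqrt_sq (by norm_num)]]
  simp only [div_pow, mul_pow]
  rw [Real.sq_sqrt (by positivity : (0:ℝ) ≤ 2*(n:ℝ))]
  simp only [← pow_mul, Nat.mul_comm n 2]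
  rw [show (2:ℝ)^(2*n) = 4^n by rw [pow_mul]; norm_num]
  have hsq : Real.sqrt n * Real.sqrt n = (n:ℝ) := Real.mul_self_sqrt hN.le
  have hne1 : Real.sqrt n ≠ 0 := by positivity
  have hne2 : ((n:ℝ)) ^ (2*n) ≠ 0 := by positivity
  have hne3 : (n.factorial : ℝ) ≠ 0 := by positivity
  have hne4 : (Real.exp 1) ^ (2*n) ≠ 0 := by positivity
  have h4 : (4:ℝ)^n ≠ 0 := by positivity
  field_simp
  ring_nf
  rw [Real.sq_sqrt hN.le]

noncomputable def cseq (n : ℕ) : ℝ :=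
  (Nat.centralBinom n : ℝ) * Real.sqrt (n * Real.pi) * Real.exp (2 / (15 * n)) / 4 ^ n

lemma cseq_tendsto : Tendsto cseq atTop (𝓝 1) := by
  have h2n : Tendsto (fun n : ℕ => 2 * n) atTop atTop :=
    tendsto_atTop_atTop_of_monotone (fun a b h => by omega) (fun b => ⟨b, by omega⟩)
  have hA : Tendsto (fun n : ℕ => stirlingSeq (2 * n)) atTop (𝓝 (Real.sqrt Real.pi)) :=
    tendsto_stirlingSeq_sqrt_pi.comp h2n
  have hB : Tendsto (fun n : ℕ => stirlingSeq n ^ 2) atTop (𝓝 (Real.sqrt Real.pi ^ 2)) :=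
    tendsto_stirlingSeq_sqrt_pi.pow 2
  have hE : Tendsto (fun n : ℕ => Real.exp (2 / (15 * n))) atTop (𝓝 1) := by
    have h0 : Tendsto (fun n : ℕ => 2 / (15 * (n:ℝ))) atTop (𝓝 0) := by
      have := tendsto_const_div_atTop_nhds_zero_nat (2/15 : ℝ)
      simpa [div_div] using this
    simpa [Function.comp_def] using (Real.continuous_exp.tendsto 0).comp h0
  have hπ : Real.sqrt Real.pi ≠ 0 := by positivity
  have hlim : Tendsto
      (fun n : ℕ => stirlingSeq (2 * n) / stirlingSeq n ^ 2
        * (Real.sqrt Real.pi * Real.exp (2 / (15 * n)))) atTop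
      (𝓝 (Real.sqrt Real.pi / Real.sqrt Real.pi ^ 2 * (Real.sqrt Real.pi * 1))) :=
    (hA.div hB (by positivity)).mul (tendsto_const_nhds.mul hE)
  have hval : Real.sqrt Real.pi / Real.sqrt Real.pi ^ 2 * (Real.sqrt Real.pi * 1) = 1 := by
    field_simp
  rw [hval] at hlim
  refine hlim.congr' ?_
  filter_upwards [eventually_ge_atTop 1] with n hn
  rw [cseq, ← ident n hn, Real.sqrt_mul (by positivity) Real.pi]
  ring

lemma cseq_step (n : ℕ) (hn : 0 < n) : cseq (n + 1) ≤ cseq n := by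
  set N : ℝ := (n : ℝ) with hNdef
  have hN : (1:ℝ) ≤ N := by rw [hNdef]; exact_mod_cast hn
  have hN0 : (0:ℝ) < N := by linarith
  set E0 : ℝ := Real.exp (2 / (15 * N)) with hE0
  set E1 : ℝ := Real.exp (2 / (15 * (N + 1))) with hE1
  -- key squared inequality
  have hy : Real.exp (4 / (15 * N)) = Real.exp (4 / (15 * (N+1))) * Real.exp (4 / (15 * N * (N+1))) := by
    rw [← Real.exp_add]
    congr 1
    field_simp
  have hysub : N * (N + 1) * (4 / (15 * N * (N+1))) = 4 / 15 := by
    field_simp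
  have keysq : (2*N+1)^2 * Real.exp (4 / (15 * (N+1))) ≤ 4*N*(N+1) * Real.exp (4 / (15 * N)) := by
    rw [hy]
    have hexp := Real.add_one_le_exp (4 / (15 * N * (N+1)))
    have hpos : (0:ℝ) < Real.exp (4 / (15 * (N+1))) := Real.exp_pos _
    have h2 : (2*N+1)^2 ≤ 4*N*(N+1) * Real.exp (4 / (15 * N * (N+1))) := by
      nlinarith [mul_le_mul_of_nonneg_left hexp (show (0:ℝ) ≤ 4*N*(N+1) by positivity)]
    calc (2*N+1)^2 * Real.exp (4 / (15 * (N+1)))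
        ≤ (4*N*(N+1) * Real.exp (4 / (15 * N * (N+1)))) * Real.exp (4 / (15 * (N+1))) :=
          mul_le_mul_of_nonneg_right h2 hpos.le
      _ = 4*N*(N+1) * (Real.exp (4 / (15 * (N+1))) * Real.exp (4 / (15 * N * (N+1)))) := by ring
  have hE1sq : E1 ^ 2 = Real.exp (4 / (15 * (N+1))) := by
    rw [hE1, ← Real.exp_nat_mul]
    congr 1; ring
  have hE0sq : E0 ^ 2 = Real.exp (4 / (15 * N)) := by
    rw [hE0, ← Real.exp_nat_mul]
    congr 1; ring
  have hsN : Real.sqrt N * Real.sqrt N = N := Real.mul_self_sqrt hN0.le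
  have hsN1 : Real.sqrt (N+1) * Real.sqrt (N+1) = N + 1 := Real.mul_self_sqrt (by linarith)
  -- key inequality
  have key : (2*N+1) * E1 ≤ 2 * Real.sqrt N * Real.sqrt (N+1) * E0 := by
    have hL : (0:ℝ) ≤ (2*N+1) * E1 := by positivity
    have hR : (0:ℝ) ≤ 2 * Real.sqrt N * Real.sqrt (N+1) * E0 := by positivity
    have hsq : ((2*N+1) * E1)^2 ≤ (2 * Real.sqrt N * Real.sqrt (N+1) * E0)^2 := by
      have : (2 * Real.sqrt N * Real.sqrt (N+1) * E0)^2 = 4*N*(N+1) * E0^2 := by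
        rw [mul_pow, mul_pow, mul_pow, Real.sq_sqrt hN0.le,
          Real.sq_sqrt (by linarith : (0:ℝ) ≤ N+1)]
        ring
      rw [this, hE0sq]
      calc ((2*N+1) * E1)^2 = (2*N+1)^2 * E1^2 := by ring
        _ = (2*N+1)^2 * Real.exp (4 / (15 * (N+1))) := by rw [hE1sq]
        _ ≤ 4*N*(N+1) * Real.exp (4 / (15 * N)) := keysq
    calc (2*N+1) * E1 = Real.sqrt (((2*N+1) * E1)^2) := (Real.sqrt_sq hL).symm
      _ ≤ Real.sqrt ((2 * Real.sqrt N * Real.sqrt (N+1) * E0)^2) := Real.sqrt_le_sqrt hsq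
      _ = 2 * Real.sqrt N * Real.sqrt (N+1) * E0 := Real.sqrt_sq hR
  -- central binomial recursion
  have hBB : ((n:ℝ) + 1) * (Nat.centralBinom (n+1) : ℝ) = 2 * (2*N+1) * (Nat.centralBinom n : ℝ) := by
    have := Nat.succ_mul_centralBinom_succ n
    have h2 : (((n:ℝ)+1) * Nat.centralBinom (n+1)) = 2 * (2*(n:ℝ)+1) * Nat.centralBinom n := by
      exact_mod_cast this
    push_cast at h2 ⊢
    rw [hNdef]
    linear_combination h2
  set B : ℝ := (Nat.centralBinom n : ℝ) with hBdef
  have hBpos : (0:ℝ) < B := by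
    rw [hBdef]; exact_mod_cast n.centralBinom_pos
  have hB' : (Nat.centralBinom (n+1) : ℝ) = 2 * (2*N+1) * B / (N + 1) := by
    rw [eq_div_iff (by positivity : (N:ℝ) + 1 ≠ 0)]
    rw [hBdef]
    linear_combination hBB
  rw [cseq, cseq, hB']
  push_cast
  rw [← hNdef, ← hE0, ← hE1]
  rw [Real.sqrt_mul (by positivity : (0:ℝ) ≤ N+1) Real.pi,
    Real.sqrt_mul hN0.le Real.pi]
  rw [div_le_div_iff₀ (by positivity) (by positivity)]
  have hπ : (0:ℝ) < Real.sqrt Real.pi := Real.sqrt_pos.mpr Real.pi_pos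
  have h4 : (0:ℝ) < (4:ℝ)^n := by positivity
  rw [div_mul_eq_mul_div, div_mul_eq_mul_div, div_mul_eq_mul_div, div_le_iff₀ (by positivity : (0:ℝ) < N+1)]
  calc 2 * (2*N+1) * B * (Real.sqrt (N+1) * Real.sqrt Real.pi) * E1 * 4^n
      = (2 * B * Real.sqrt Real.pi * 4^n * Real.sqrt (N+1)) * ((2*N+1) * E1) := by ring
    _ ≤ (2 * B * Real.sqrt Real.pi * 4^n * Real.sqrt (N+1)) * (2 * Real.sqrt N * Real.sqrt (N+1) * E0) := by
        apply mul_le_mul_of_nonneg_left key (by positivity)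
    _ = 4 * B * Real.sqrt Real.pi * 4^n * Real.sqrt N * (Real.sqrt (N+1) * Real.sqrt (N+1)) * E0 := by ring
    _ = B * (Real.sqrt N * Real.sqrt Real.pi) * E0 * 4 ^ (n+1) * (N+1) := by
        rw [hsN1, pow_succ]; ring

/-- lower bound on the central binomial coefficient:
`C(2n, n) ≥ (2^{2n}/√(nπ)) · e^{-2/(15n)}`. -/
theorem stmt19 (n : ℕ) (hn : 0 < n) :
    (2 : ℝ) ^ (2 * n) / Real.sqrt (n * Real.pi) * Real.exp (-2 / (15 * n))
      ≤ (((2 * n).choose n : ℕ) : ℝ) := by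
  have h1 : (1:ℝ) ≤ cseq n := by
    refine le_of_tendsto cseq_tendsto (eventually_atTop.2 ⟨n, fun m hm => ?_⟩)
    induction m, hm using Nat.le_induction with
    | base => exact le_refl _
    | succ m hm ih => exact (cseq_step m (lt_of_lt_of_le hn hm)).trans ih
  rw [cseq] at h1
  have hspos : (0:ℝ) < Real.sqrt ((n:ℝ) * Real.pi) := by
    apply Real.sqrt_pos.mpr
    have : (0:ℝ) < n := by exact_mod_cast hn
    positivity
  have h2 : (4:ℝ)^n ≤ (Nat.centralBinom n : ℝ) * Real.sqrt ((n:ℝ) * Real.pi)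
      * Real.exp (2 / (15 * n)) := (one_le_div (by positivity)).mp h1
  have hcast : (((2 * n).choose n : ℕ) : ℝ) = (Nat.centralBinom n : ℝ) := by
    rw [Nat.centralBinom]
  rw [hcast, show (2:ℝ)^(2*n) = 4^n by rw [pow_mul]; norm_num,
    div_mul_eq_mul_div, div_le_iff₀ hspos]
  calc (4:ℝ)^n * Real.exp (-2 / (15 * n))
      ≤ ((Nat.centralBinom n : ℝ) * Real.sqrt ((n:ℝ) * Real.pi) * Real.exp (2 / (15 * n)))
        * Real.exp (-2 / (15 * n)) :=
        mul_le_mul_of_nonneg_right h2 (Real.exp_pos _).le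
    _ = (Nat.centralBinom n : ℝ) * Real.sqrt ((n:ℝ) * Real.pi)
        * (Real.exp (2 / (15 * n)) * Real.exp (-2 / (15 * n))) := by ring
    _ = (Nat.centralBinom n : ℝ) * Real.sqrt ((n:ℝ) * Real.pi) := by
        rw [← Real.exp_add, show (2:ℝ) / (15 * n) + -2 / (15 * n) = 0 by ring, Real.exp_zero, mul_one]
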